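/- arXiv:1503.08882 — 3 statements merged into one kernel-verified Lean document; each statement's English description precedes it below -/
import Mathlib

section
/- With the hypotheses of the idempotent lifting lemma, suppose additionally that A carries an anti-involution σ preserving each k_r, and that σ(α) = α. Then the lifted idempotent α̃ can be chosen with σ(α̃) = α̃. -/
/-- The Newton step for idempotent lifting. -/
def liftStep {A : Type*} [Ring A] (e : A) : A := 3 * e ^ 2 - 2 * e ^ 3

/-- The iterated Newton sequence. -/
def liftSeq {A : Type*} [Ring A] (α : A) (n : ℕ) : A := (liftStep)^[n] α

lemma liftSeq_zero {A : Type*} [Ring A] (α : A) : liftSeq α 0 = α := rfl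

lemma liftSeq_succ {A : Type*} [Ring A] (α : A) (n : ℕ) :
    liftSeq α (n + 1) = liftStep (liftSeq α n) :=
  Function.iterate_succ_apply' _ _ _

lemma liftStep_sub (A : Type*) [Ring A] (e : A) :
    liftStep e - e = (e * e - e) - 2 • ((e * e - e) * e) := by
  simp only [liftStep, nsmul_eq_mul, Nat.cast_ofNat]
  noncomm_ring

lemma liftStep_err (A : Type*) [Ring A] (e : A) :
    liftStep e * liftStep e - liftStep e =
      4 • ((e * e - e) * (e * e - e) * (e * e - e)) - 3 • ((e * e - e) * (e * e - e)) := by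
  simp only [liftStep, nsmul_eq_mul, Nat.cast_ofNat]
  noncomm_ring

lemma liftStep_eq (A : Type*) [Ring A] (e : A) :
    liftStep e = 3 • (e * e) - 2 • (e * (e * e)) := by
  simp only [liftStep, nsmul_eq_mul, Nat.cast_ofNat]
  noncomm_ring

/-- Idempotent lifting with an anti-involution: the lifted idempotent can be chosen σ-fixed. -/
theorem idempotent_lifting_symmetric {A : Type*} [Ring A] (k : ℕ → AddSubgroup A)
    (hdec : ∀ r s : ℕ, r ≤ s → k s ≤ k r)
    (hmul : ∀ r s : ℕ, ∀ x ∈ k r, ∀ y ∈ k s, x * y ∈ k (r + s))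
    (hsep : ∀ x : A, (∀ r : ℕ, 1 ≤ r → x ∈ k r) → x = 0)
    (hcomplete : ∀ e : ℕ → A,
      (∀ r : ℕ, ∃ N : ℕ, ∀ m n : ℕ, N ≤ m → N ≤ n → e m - e n ∈ k r) →
      ∃ L : A, ∀ r : ℕ, ∃ N : ℕ, ∀ n : ℕ, N ≤ n → e n - L ∈ k r)
    (σ : A → A)
    (hσadd : ∀ x y : A, σ (x + y) = σ x + σ y)
    (hσmul : ∀ x y : A, σ (x * y) = σ y * σ x)
    (hσinv : ∀ x : A, σ (σ x) = x)
    (hσk : ∀ (r : ℕ) (x : A), x ∈ k r → σ x ∈ k r)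
    (α : A) (hα : α ∈ k 0) (r : ℕ) (hr : 1 ≤ r)
    (hidem : α * α - α ∈ k r) (hσα : σ α = α) :
    ∃ α' : A, α' * α' = α' ∧ α' ∈ k 0 ∧ α' - α ∈ k r ∧ σ α' = α' := by
  -- basic σ facts
  have hσ0 : σ 0 = 0 := by
    have h := hσadd 0 0
    rw [add_zero] at h
    exact left_eq_add.mp h
  have hσneg : ∀ x : A, σ (-x) = - σ x := by
    intro x
    have h := hσadd x (-x)
    rw [add_neg_cancel, hσ0] at h
    exact (neg_eq_of_add_eq_zero_right h.symm).symm
  have hσsub : ∀ x y : A, σ (x - y) = σ x - σ y := by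
    intro x y
    rw [sub_eq_add_neg, hσadd, hσneg, sub_eq_add_neg]
  have hσsmul : ∀ (n : ℕ) (x : A), σ (n • x) = n • σ x := by
    intro n x
    induction n with
    | zero => simpa using hσ0
    | succ m ih => rw [succ_nsmul, hσadd, ih, succ_nsmul]
  set e : ℕ → A := liftSeq α with he
  -- invariants along the sequence
  have key : ∀ n : ℕ, e n ∈ k 0 ∧ σ (e n) = e n ∧
      (e n * e n - e n ∈ k (r + n)) ∧ e n - α ∈ k r := by
    intro n
    induction n with
    | zero =>
      refine ⟨hα, hσα, by simpa [he, liftSeq_zero] using hidem, by simpa [he, liftSeq_zero, sub_self] using (k r).zero_mem⟩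
    | succ m ih =>
      obtain ⟨h0, hσe, herr, hα'⟩ := ih
      have hx : e m * e m - e m ∈ k (r + m) := herr
      have hxk0 : e m * e m - e m ∈ k 0 := hdec 0 (r + m) (Nat.zero_le _) hx
      have hsucc : e (m + 1) = liftStep (e m) := liftSeq_succ α m
      have hmem0 : e (m + 1) ∈ k 0 := by
        rw [hsucc, liftStep_eq]
        exact sub_mem ((k 0).nsmul_mem (hmul 0 0 _ h0 _ h0) 3)
          ((k 0).nsmul_mem (by simpa using hmul 0 0 _ h0 _ (hmul 0 0 _ h0 _ h0)) 2)
      have hσe' : σ (e (m + 1)) = e (m + 1) := by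
        rw [hsucc, liftStep_eq, hσsub, hσsmul, hσsmul, hσmul, hσmul, hσmul, hσe, mul_assoc]
      have herr' : e (m + 1) * e (m + 1) - e (m + 1) ∈ k (r + (m + 1)) := by
        have h1 : (e m * e m - e m) * (e m * e m - e m) ∈ k ((r + m) + (r + m)) :=
          hmul _ _ _ hx _ hx
        have h2 : (e m * e m - e m) * (e m * e m - e m) * (e m * e m - e m) ∈
            k (((r + m) + (r + m)) + (r + m)) := hmul _ _ _ h1 _ hx
        have hle1 : r + (m + 1) ≤ (r + m) + (r + m) := by omega
        have hle2 : r + (m + 1) ≤ ((r + m) + (r + m)) + (r + m) := by omega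
        rw [hsucc, liftStep_err]
        exact sub_mem ((k _).nsmul_mem (hdec _ _ hle2 h2) 4)
          ((k _).nsmul_mem (hdec _ _ hle1 h1) 3)
      have hstep : e (m + 1) - e m ∈ k (r + m) := by
        rw [hsucc, liftStep_sub]
        exact sub_mem hx ((k _).nsmul_mem (by simpa using hmul (r + m) 0 _ hx _ h0) 2)
      have hstepr : e (m + 1) - e m ∈ k r := hdec r (r + m) (Nat.le_add_right _ _) hstep
      refine ⟨hmem0, hσe', herr', ?_⟩
      have := (k r).add_mem hstepr hα'
      simpa [sub_add_sub_cancel] using this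
  -- telescoping: control of differences
  have hdiff : ∀ n m : ℕ, n ≤ m → e m - e n ∈ k (r + n) := by
    intro n m hnm
    induction m with
    | zero =>
      have : n = 0 := Nat.le_zero.mp hnm
      subst this; simpa using (k r).zero_mem
    | succ p ih =>
      rcases Nat.lt_or_ge n (p + 1) with h | h
      · have hnp : n ≤ p := Nat.lt_succ_iff.mp h
        have h1 : e p - e n ∈ k (r + n) := ih hnp
        have hstep : e (p + 1) - e p ∈ k (r + p) := by
          obtain ⟨h0, _, hx, _⟩ := key p
          rw [show e (p + 1) = liftStep (e p) from liftSeq_succ α p, liftStep_sub]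
          exact sub_mem hx ((k _).nsmul_mem (by simpa using hmul (r + p) 0 _ hx _ h0) 2)
        have h2 : e (p + 1) - e p ∈ k (r + n) := hdec _ _ (by omega) hstep
        have := (k (r + n)).add_mem h2 h1
        simpa [sub_add_sub_cancel] using this
      · have : n = p + 1 := le_antisymm hnm h
        subst this; simpa using (k (r + (p+1))).zero_mem
  -- Cauchy
  have hcauchy : ∀ r' : ℕ, ∃ N : ℕ, ∀ m n : ℕ, N ≤ m → N ≤ n → e m - e n ∈ k r' := by
    intro r'
    refine ⟨r', fun m n hm hn => ?_⟩
    rcases Nat.le_total n m with h | h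
    · exact hdec r' (r + n) (by omega) (hdiff n m h)
    · have := (k (r + m)).neg_mem (hdiff m n h)
      rw [neg_sub] at this
      exact hdec r' (r + m) (by omega) this
  obtain ⟨L, hL⟩ := hcomplete e hcauchy
  -- L ∈ k 0
  have hL0 : L ∈ k 0 := by
    obtain ⟨N, hN⟩ := hL 0
    have h1 := hN N le_rfl
    have h2 := (key N).1
    have := (k 0).sub_mem h2 h1
    simpa using this
  -- L - α ∈ k r
  have hLα : L - α ∈ k r := by
    obtain ⟨N, hN⟩ := hL r
    have h1 := hN N le_rfl
    have h2 := (key N).2.2.2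
    have := (k r).sub_mem h2 h1
    simpa [sub_sub_sub_cancel_left] using this
  -- L is idempotent
  have hLidem : L * L = L := by
    rw [← sub_eq_zero]
    apply hsep
    intro r' hr'
    obtain ⟨N, hN⟩ := hL r'
    set n := max N r' with hn
    have hne : e n - L ∈ k r' := hN n (le_max_left _ _)
    have hnk0 : e n ∈ k 0 := (key n).1
    have herr : e n * e n - e n ∈ k (r + n) := (key n).2.2.1
    have herr' : e n * e n - e n ∈ k r' := hdec _ _ (by omega) herr
    have hLe : L - e n ∈ k r' := by
      have := (k r').neg_mem hne; rwa [neg_sub] at this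
    have t1 : L * (L - e n) ∈ k r' := by simpa using hmul 0 r' _ hL0 _ hLe
    have t2 : (L - e n) * e n ∈ k r' := by simpa using hmul r' 0 _ hLe _ hnk0
    have : L * (L - e n) + (L - e n) * e n + (e n * e n - e n) + (e n - L) ∈ k r' :=
      (k r').add_mem ((k r').add_mem ((k r').add_mem t1 t2) herr') hne
    have heq : L * (L - e n) + (L - e n) * e n + (e n * e n - e n) + (e n - L) = L * L - L := by
      noncomm_ring
    rwa [heq] at this
  -- L is σ-fixed
  have hσL : σ L = L := by
    rw [← sub_eq_zero]
    apply hsep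
    intro r' hr'
    obtain ⟨N, hN⟩ := hL r'
    have hne : e N - L ∈ k r' := hN N le_rfl
    have hσe : σ (e N) = e N := (key N).2.1
    have h1 : σ (e N - L) ∈ k r' := hσk r' _ hne
    rw [hσsub, hσe] at h1
    have := (k r').add_mem h1 hne
    have heq : (e N - σ L) + (e N - L) ∈ k r' := this
    have h2 := (k r').neg_mem ((k r').sub_mem h1 hne)
    have heq2 : -((e N - σ L) - (e N - L)) = σ L - L := by abel
    rwa [heq2] at h2
  exact ⟨L, hLidem, hL0, hLα, hσL⟩
end

section
/- Let Λ be a lattice sequence in V of period e over o_F. Then the direct sum Λ ⊕ (Λ+1) ⊕ ⋯ ⊕ (Λ+e−1), defined in V^{⊕e} by (⊕_{l}(Λ+l))_i = ⊕_{l=0}^{e−1} Λ_{i−l}, is a lattice chain, i.e. an injective lattice sequence, of the same period e. -/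
open Pointwise

/-- The direct sum `Λ ⊕ (Λ+1) ⊕ ⋯ ⊕ (Λ+e−1)` of the translates of a lattice sequence `Λ`,
defined by `(⊕ₗ(Λ+l))_i = ⊕_{l=0}^{e-1} Λ_{i-l}` inside `V^{⊕e}`. -/
def translateSum {O V : Type*} [CommRing O] [AddCommGroup V] [Module O V]
    (Λ : ℤ → Submodule O V) (e : ℕ) : ℤ → Submodule O (Fin e → V) :=
  fun i => Submodule.pi Set.univ (fun l : Fin e => Λ (i - (l : ℕ)))

lemma mem_pointwise_smul_iff {O V : Type*} [CommRing O] [AddCommGroup V] [Module O V]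
    {a : O} {S : Submodule O V} {x : V} : x ∈ a • S ↔ ∃ y ∈ S, a • y = x := by
  rw [← SetLike.mem_coe, Submodule.coe_pointwise_smul]
  exact Set.mem_smul_set

/-- Pointwise smul commutes with `Submodule.pi` over `univ`. -/
lemma smul_pi_univ {O V : Type*} [CommRing O] [AddCommGroup V] [Module O V]
    {ι : Type*} (r : O) (f : ι → Submodule O V) :
    r • Submodule.pi Set.univ f = Submodule.pi Set.univ (fun l => r • f l) := by
  apply le_antisymm
  · rintro x hx
    obtain ⟨y, hy, rfl⟩ := mem_pointwise_smul_iff.mp hx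
    intro l _
    exact Submodule.smul_mem_pointwise_smul _ _ _ (hy l (Set.mem_univ l))
  · intro x hx
    choose y hy hxy using fun l => mem_pointwise_smul_iff.mp
      (hx l (Set.mem_univ l))
    refine mem_pointwise_smul_iff.mpr ⟨y, fun l _ => hy l, ?_⟩
    funext l
    exact hxy l

lemma pi_univ_eq_iff {O V : Type*} [CommRing O] [AddCommGroup V] [Module O V]
    {ι : Type*} [DecidableEq ι] {f g : ι → Submodule O V}
    (h : Submodule.pi Set.univ f = Submodule.pi Set.univ g) (l : ι) : f l = g l := by
  ext x
  constructor <;> intro hx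
  · have hmem : Pi.single l x ∈ Submodule.pi Set.univ f := by
      intro j _
      rcases eq_or_ne j l with rfl | hj
      · simpa using hx
      · simp [Pi.single_eq_of_ne hj]
    rw [h] at hmem
    simpa using hmem l (Set.mem_univ l)
  · have hmem : Pi.single l x ∈ Submodule.pi Set.univ g := by
      intro j _
      rcases eq_or_ne j l with rfl | hj
      · simpa using hx
      · simp [Pi.single_eq_of_ne hj]
    rw [← h] at hmem
    simpa using hmem l (Set.mem_univ l)

/-- For a lattice sequence `Λ` of period `e`, the direct sum of its translates
`Λ ⊕ (Λ+1) ⊕ ⋯ ⊕ (Λ+e−1)` is a lattice chain (an injective lattice sequence) of the same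
period `e`. -/
theorem translateSum_is_chain {O F V : Type*} [CommRing O] [IsDomain O]
    [IsDiscreteValuationRing O] [Field F] [Algebra O F] [IsFractionRing O F]
    [AddCommGroup V] [Module F V] [Module O V] [IsScalarTower O F V] [FiniteDimensional F V]
    [Nontrivial V]
    (π : O) (hπ : Irreducible π)
    (Λ : ℤ → Submodule O V) (e : ℕ) (he : 0 < e)
    (hdec : ∀ s t : ℤ, s ≤ t → Λ t ≤ Λ s)
    (hper : ∀ s : ℤ, Λ (s + (e : ℤ)) = π • Λ s)
    (hfg : ∀ s : ℤ, (Λ s).FG)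
    (hspan : ∀ s : ℤ, Submodule.span F ((Λ s : Set V)) = ⊤) :
    (∀ s t : ℤ, s ≤ t → translateSum Λ e t ≤ translateSum Λ e s) ∧
    (∀ s : ℤ, translateSum Λ e (s + (e : ℤ)) = π • translateSum Λ e s) ∧
    Function.Injective (translateSum Λ e) := by
  -- iterated periodicity
  have hper' : ∀ (m : ℕ) (n : ℤ), Λ (n + (m : ℤ) * e) = π ^ m • Λ n := by
    intro m
    induction m with
    | zero => intro n; simp
    | succ m ih =>
      intro n
      have : (n + ((m : ℤ) + 1) * e) = (n + (m : ℤ) * e) + e := by ring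
      rw [Nat.cast_succ, this, hper, ih, smul_smul, ← pow_succ']
  refine ⟨?_, ?_, ?_⟩
  · intro s t hst x hx l _
    exact hdec _ _ (by omega) (hx l (Set.mem_univ l))
  · intro s
    simp only [translateSum]
    rw [smul_pi_univ]
    congr 1
    funext l
    rw [show s + (e : ℤ) - (l : ℕ) = (s - (l : ℕ)) + e by ring, hper]
  · -- injectivity
    intro s t h
    by_contra hne
    -- WLOG s < t: handle both orders via a helper
    have key : ∀ s t : ℤ, s < t → translateSum Λ e s = translateSum Λ e t → False := by
      clear hne h s t
      intro s t hst h
      have hcomp : ∀ l : ℕ, l < e → Λ (s - l) = Λ (t - l) := by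
        intro l hl
        have := pi_univ_eq_iff (f := fun l : Fin e => Λ (s - (l : ℕ)))
          (g := fun l : Fin e => Λ (t - (l : ℕ))) h ⟨l, hl⟩
        simpa using this
      set d : ℤ := t - s with hd
      have hd0 : 0 < d := by omega
      -- extend equality upward
      have P : ∀ l : ℕ, Λ (s - e + 1 + l) = Λ (s - e + 1 + l + d) := by
        intro l
        induction l using Nat.strong_induction_on with
        | _ l ih =>
          by_cases hl : l < e
          · have h1 := hcomp (e - 1 - l) (by omega)
            have e1 : s - e + 1 + (l : ℤ) = s - ((e - 1 - l : ℕ) : ℤ) := by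
              push_cast; omega
            have e2 : s - e + 1 + (l : ℤ) + d = t - ((e - 1 - l : ℕ) : ℤ) := by
              push_cast; omega
            rw [e2, e1]; exact h1
          · have h1 := ih (l - e) (by omega)
            have e1 : s - e + 1 + (l : ℤ) = (s - e + 1 + ((l - e : ℕ) : ℤ)) + e := by
              push_cast; omega
            have e2 : s - e + 1 + (l : ℤ) + d = (s - e + 1 + ((l - e : ℕ) : ℤ) + d) + e := by
              push_cast; omega
            rw [e2, e1, hper, hper, h1]
      have hdt : ((d.toNat : ℤ)) = d := Int.toNat_of_nonneg hd0.le
      have hcast : (((e - 1 : ℕ) : ℤ)) = (e : ℤ) - 1 := by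
        have : 1 ≤ e := he
        push_cast [Nat.cast_sub this]
        ring
      have Q : ∀ k : ℕ, Λ s = Λ (s + k * d) := by
        intro k
        induction k with
        | zero => simp
        | succ k ih =>
          have hk : s + (k : ℤ) * d = s - e + 1 + ((e - 1 : ℕ) + k * d.toNat : ℕ) := by
            push_cast [hdt, hcast]
            ring
          have hP := P ((e - 1 : ℕ) + k * d.toNat)
          rw [← hk] at hP
          rw [ih, hP]
          congr 1
          push_cast
          ring
      -- Λ s = π ^ d.toNat • Λ s
      have hpow : Λ s = π ^ d.toNat • Λ s := by
        have h1 := Q e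
        have h2 := hper' d.toNat s
        rw [show s + (d.toNat : ℤ) * e = s + (e : ℤ) * d by rw [hdt]; ring] at h2
        rw [← h1] at h2
        exact h2
      -- Nakayama
      have hle : Λ s ≤ Ideal.span {π} • Λ s := by
        have hmem : π ^ d.toNat ∈ Ideal.span {π} := by
          refine Ideal.mem_span_singleton.mpr ⟨π ^ (d.toNat - 1), ?_⟩
          rw [← pow_succ']
          congr 1
          omega
        calc Λ s = π ^ d.toNat • Λ s := hpow
          _ = Ideal.span {π ^ d.toNat} • Λ s :=
              (Submodule.ideal_span_singleton_smul _ _).symm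
          _ ≤ Ideal.span {π} • Λ s := by
              refine Submodule.smul_mono_left ?_
              rw [Ideal.span_le]
              rintro x rfl
              exact hmem
      have hjac : (Ideal.span {π} : Ideal O) ≤ (⊥ : Ideal O).jacobson := by
        rw [IsLocalRing.jacobson_eq_maximalIdeal ⊥ bot_ne_top, Ideal.span_le]
        intro x hx
        rcases hx with rfl
        exact hπ.not_isUnit
      have hbot : Λ s = ⊥ :=
        Submodule.eq_bot_of_le_smul_of_le_jacobson_bot _ _ (hfg s) hle hjac
      have hsp := hspan s
      rw [hbot] at hsp
      simp at hsp
    rcases lt_trichotomy s t with h1 | h1 | h1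
    · exact key s t h1 h
    · exact hne h1
    · exact key t s h1 h.symm
end

section
/- Let [Λ, q, q−1, β] be a stratum with ν_Λ(β) = −q > 0, let e = e(Λ|o_F), g = gcd(e,q), and y_β = β^{e/g}·π^{q/g} ∈ a_0(Λ). If the reduction φ_β of the characteristic polynomial of y_β modulo p_F equals X^{dim V}, then β^{em} ∈ a_{1−qme}(Λ) where m = dim_F V; in particular y_β is topologically nilpotent modulo a_1. -/
/-- Membership in the maximal ideal `p_F` of the ring of integers `O`, viewed inside `F`. -/
def InMaxIdeal (O F : Type*) [CommRing O] [IsLocalRing O] [CommRing F] [Algebra O F]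
    (x : F) : Prop :=
  ∃ y ∈ IsLocalRing.maximalIdeal O, algebraMap O F y = x

/-- If, for a stratum `[Λ, q, q−1, β]` with `ν_Λ(β) = −q`, the reduction mod `p_F` of the
characteristic polynomial of `y_β = β^{e/g} π^{q/g}` equals `X^{dim V}`, then
`β^{em} ∈ a_{1−qme}(Λ)`, where `m = dim_F V`. -/
theorem non_fundamental_nilpotent {O F V : Type*} [CommRing O] [IsDomain O]
    [IsDiscreteValuationRing O] [Field F] [Algebra O F] [IsFractionRing O F]
    [AddCommGroup V] [Module F V] [Module O V] [IsScalarTower O F V] [FiniteDimensional F V]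
    (π : O) (hπ : Irreducible π)
    (Λ : ℤ → Submodule O V) (e q : ℕ) (he : 0 < e) (hq : 0 < q)
    (hdec : ∀ s t : ℤ, s ≤ t → Λ t ≤ Λ s)
    (hper : ∀ s : ℤ, ∀ v : V, v ∈ Λ (s + (e : ℤ)) ↔ ∃ w ∈ Λ s, v = π • w)
    (hfg : ∀ s : ℤ, (Λ s).FG)
    (hspan : ∀ s : ℤ, Submodule.span F ((Λ s : Set V)) = ⊤)
    (β : Module.End F V)
    (hβq : ∀ s : ℤ, ∀ v ∈ Λ s, β v ∈ Λ (s - (q : ℤ)))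
    (hβexact : ¬ ∀ s : ℤ, ∀ v ∈ Λ s, β v ∈ Λ (s - (q : ℤ) + 1))
    (m : ℕ) (hm : m = Module.finrank F V)
    (hchar : ∀ i : ℕ, i < m →
      InMaxIdeal O F
        ((LinearMap.charpoly
            ((algebraMap O F π) ^ (q / Nat.gcd e q) • β ^ (e / Nat.gcd e q))).coeff i)) :
    ∀ s : ℤ, ∀ v ∈ Λ s, (β ^ (e * m)) v ∈ Λ (s + (1 - (q * m * e : ℤ))) := by
  set g : ℕ := Nat.gcd e q with hgdef
  have hg : 0 < g := Nat.gcd_pos_of_pos_left q he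
  obtain ⟨a, ha⟩ : g ∣ e := Nat.gcd_dvd_left e q
  obtain ⟨b, hb⟩ : g ∣ q := Nat.gcd_dvd_right e q
  have heg : e / g = a := by rw [ha]; exact Nat.mul_div_cancel_left a hg
  have hqg : q / g = b := by rw [hb]; exact Nat.mul_div_cancel_left b hg
  set c : F := algebraMap O F π with hcdef
  set y : Module.End F V := c ^ (q / g) • β ^ (e / g) with hydef
  -- π acting on V via O equals c acting via F
  have hsmulπ : ∀ w : V, π • w = c • w := fun w => (algebraMap_smul F π w).symm
  have hc0 : c ≠ 0 := by
    simpa [hcdef] using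
      (map_ne_zero_iff (algebraMap O F) (IsFractionRing.injective O F)).mpr hπ.ne_zero
  have hπinj : ∀ w w' : V, π • w = π • w' → w = w' := by
    intro w w' h
    rw [hsmulπ, hsmulπ] at h
    exact smul_right_injective V hc0 h
  -- powers of β shift the filtration down
  have hβpow : ∀ (k : ℕ) (t : ℤ), ∀ v ∈ Λ t, (β ^ k) v ∈ Λ (t - k * q) := by
    intro k
    induction k with
    | zero => intro t v hv; simpa using hv
    | succ k ih =>
      intro t v hv
      have h1 : (β ^ (k + 1)) v = (β ^ k) (β v) := by
        rw [pow_succ]; rfl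
      have h2 := ih (t - q) (β v) (hβq t v hv)
      rw [h1]
      have hcast : t - ((k + 1 : ℕ) : ℤ) * q = t - (q : ℤ) - (k : ℤ) * q := by
        push_cast; ring
      rw [hcast]
      exact h2
  -- π-scaling shifts the filtration up
  have hπsmul : ∀ (t : ℤ), ∀ w ∈ Λ t, π • w ∈ Λ (t + e) :=
    fun t w hw => (hper t (π • w)).mpr ⟨w, hw, rfl⟩
  have hcpow : ∀ (k : ℕ) (t : ℤ), ∀ w ∈ Λ t, c ^ k • w ∈ Λ (t + k * e) := by
    intro k
    induction k with
    | zero => intro t w hw; simpa using hw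
    | succ k ih =>
      intro t w hw
      have h1 : c ^ (k + 1) • w = π • (c ^ k • w) := by
        rw [hsmulπ, ← mul_smul, pow_succ, mul_comm]
      have h2 := hπsmul (t + k * e) _ (ih t w hw)
      rw [h1]
      convert h2 using 2
      push_cast; ring
  -- y preserves the filtration
  have hy : ∀ (t : ℤ), ∀ v ∈ Λ t, y v ∈ Λ t := by
    intro t v hv
    have h1 : y v = c ^ (q / g) • ((β ^ (e / g)) v) := by
      rw [hydef]; rfl
    have h2 := hcpow (q / g) (t - (e / g : ℕ) * q) _ (hβpow (e / g) t v hv)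
    rw [h1]
    have : t - ((e / g : ℕ) : ℤ) * q + ((q / g : ℕ) : ℤ) * e = t := by
      rw [heg, hqg, ha, hb]; push_cast; ring
    rwa [this] at h2
  have hyk : ∀ (k : ℕ) (t : ℤ), ∀ v ∈ Λ t, (y ^ k) v ∈ Λ t := by
    intro k
    induction k with
    | zero => intro t v hv; simpa using hv
    | succ k ih =>
      intro t v hv
      have h1 : (y ^ (k + 1)) v = (y ^ k) (y v) := by rw [pow_succ]; rfl
      rw [h1]; exact ih t _ (hy t v hv)
  -- Cayley–Hamilton: y^m shifts the filtration by e
  have hym : ∀ (t : ℤ), ∀ v ∈ Λ t, (y ^ m) v ∈ Λ (t + e) := by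
    have hdeg : (LinearMap.charpoly y).natDegree = m := by
      rw [hm]; exact LinearMap.charpoly_natDegree y
    have hCH := LinearMap.aeval_self_charpoly y
    rw [Polynomial.aeval_eq_sum_range, hdeg, Finset.sum_range_succ] at hCH
    have hlead : (LinearMap.charpoly y).coeff m = 1 := by
      rw [← hdeg]; exact (LinearMap.charpoly_monic y).coeff_natDegree
    rw [hlead, one_smul] at hCH
    have hym' : y ^ m = -∑ i ∈ Finset.range m, (LinearMap.charpoly y).coeff i • y ^ i := by
      rw [add_comm] at hCH
      exact eq_neg_of_add_eq_zero_left hCH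
    intro t v hv
    have happ : (y ^ m) v = -∑ i ∈ Finset.range m,
        (LinearMap.charpoly y).coeff i • ((y ^ i) v) := by
      rw [hym']
      simp [LinearMap.sum_apply]
    rw [happ]
    apply neg_mem
    apply Submodule.sum_mem
    intro i hi
    obtain ⟨p, hp, hpc⟩ := hchar i (Finset.mem_range.mp hi)
    obtain ⟨u, hu⟩ : π ∣ p := by
      rw [hπ.maximalIdeal_eq, Ideal.mem_span_singleton] at hp
      exact hp
    have h1 : (LinearMap.charpoly y).coeff i • ((y ^ i) v) = π • (u • ((y ^ i) v)) := by
      rw [← hpc, hu, map_mul, mul_smul, ← hsmulπ, ← algebraMap_smul F u ((y ^ i) v)]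
    rw [h1]
    exact hπsmul t _ (Submodule.smul_mem _ u (hyk i t v hv))
  -- main argument
  intro s v hv
  -- y^(g*m) v ∈ Λ (s + e)
  clear_value g
  obtain ⟨g', rfl⟩ : ∃ g', g = g' + 1 := ⟨g - 1, by omega⟩
  have hgm : (y ^ ((g' + 1) * m)) v ∈ Λ (s + e) := by
    have h1 : (g' + 1) * m = g' * m + m := by ring
    rw [h1, pow_add]
    have : (y ^ (g' * m) * y ^ m) v = (y ^ (g' * m)) ((y ^ m) v) := rfl
    rw [this]
    exact hyk (g' * m) (s + e) _ (hym s v hv)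
  -- identify y^(g*m) with π^(q*m) • β^(e*m)
  have hid : y ^ ((g' + 1) * m) = c ^ (q * m) • β ^ (e * m) := by
    rw [hydef, smul_pow, ← pow_mul, ← pow_mul]
    congr 1
    · rw [hqg, hb]; ring
    · rw [heg, ha]; ring
  rw [hid] at hgm
  have hgm' : c ^ (q * m) • ((β ^ (e * m)) v) ∈ Λ (s + e) := hgm
  -- divide by π^(q*m)
  have hdesc : ∀ (k : ℕ) (t : ℤ) (w : V), c ^ k • w ∈ Λ (t + k * e) → w ∈ Λ t := by
    intro k
    induction k with
    | zero => intro t w hw; simpa using hw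
    | succ k ih =>
      intro t w hw
      have h1 : c ^ (k + 1) • w = π • (c ^ k • w) := by
        rw [hsmulπ, ← mul_smul, pow_succ, mul_comm]
      have h2 : t + ((k : ℤ) + 1) * e = (t + k * e) + e := by ring
      rw [h1] at hw
      have h3 : π • (c ^ k • w) ∈ Λ ((t + k * e) + e) := by
        convert hw using 2; push_cast; ring
      obtain ⟨w', hw', heq⟩ := (hper (t + k * e) _).mp h3
      have hww : w' = c ^ k • w := hπinj _ _ heq.symm
      rw [hww] at hw'
      exact ih t w hw'
  have hβm : (β ^ (e * m)) v ∈ Λ (s + e - (q * m : ℕ) * e) := by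
    apply hdesc (q * m) _ _
    convert hgm' using 2
    ring
  refine hdec _ _ ?_ hβm
  push_cast
  omega
end
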